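/- Let d ≥ 4 and let 𝔸_{d,2} be the space of skew-symmetric real d×d matrices with all row sums zero. Then: (i) the only matrix in 𝔸_{d,2} fixed by P_σ (·) P_σᵀ for all σ ∈ S_{d−1}×S_1 (permutations fixing index d) is the zero matrix; (ii) a matrix A ∈ 𝔸_{d,2} is fixed by P_σ (·) P_σᵀ for all σ ∈ S_{d−2}×S_1×S_1 (permutations fixing indices d−1 and d) if and only if there exists α ∈ ℝ with A_{i,d−1} = −α/(d−2) and A_{i,d} = α/(d−2) for all i ≤ d−2, A_{d−1,d} = −α, A skew-symmetric, and all other entries zero; in particular 𝔸_{d,2} ∩ M(d,d)^{S_{d−2}×S_1×S_1} is one-dimensional. -/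

import Mathlib

open Matrix

/-- The permutation matrix of `σ`. -/
def permMat {d : ℕ} (σ : Equiv.Perm (Fin d)) : Matrix (Fin d) (Fin d) ℝ :=
  Matrix.of fun i j => if σ j = i then (1 : ℝ) else 0

/-- The fixed-point space of a set `G` of permutations for the diagonal action
`W ↦ P_σ W P_σᵀ` on `d × d` matrices. -/
def fixedSpace {d : ℕ} (G : Set (Equiv.Perm (Fin d))) :
    Submodule ℝ (Matrix (Fin d) (Fin d) ℝ) where
  carrier := {W | ∀ σ ∈ G, permMat σ * W * (permMat σ)ᵀ = W}
  zero_mem' := by intro σ _; simp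
  add_mem' := by
    intro a b ha hb σ hσ
    rw [Matrix.mul_add, Matrix.add_mul, ha σ hσ, hb σ hσ]
  smul_mem' := by
    intro c a ha σ hσ
    rw [Matrix.mul_smul, Matrix.smul_mul, ha σ hσ]

/-- `𝔸_{d,2}`: skew-symmetric matrices with all row sums zero. -/
def Ad2 (d : ℕ) : Submodule ℝ (Matrix (Fin d) (Fin d) ℝ) where
  carrier := {A | Aᵀ = -A ∧ ∀ i, ∑ j, A i j = 0}
  zero_mem' := ⟨by simp, by simp⟩
  add_mem' := by
    rintro a b ⟨ha1, ha2⟩ ⟨hb1, hb2⟩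
    refine ⟨by rw [Matrix.transpose_add, ha1, hb1, neg_add], fun i => ?_⟩
    simp [Matrix.add_apply, Finset.sum_add_distrib, ha2 i, hb2 i]
  smul_mem' := by
    rintro c a ⟨ha1, ha2⟩
    refine ⟨by rw [Matrix.transpose_smul, ha1, smul_neg], fun i => ?_⟩
    simp [Matrix.smul_apply, ← Finset.mul_sum, ha2 i]

lemma permMat_conj {d : ℕ} (σ : Equiv.Perm (Fin d)) (A : Matrix (Fin d) (Fin d) ℝ) (i j : Fin d) :
    (permMat σ * A * (permMat σ)ᵀ) i j = A (σ⁻¹ i) (σ⁻¹ j) := by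
  have key : ∀ l : Fin d, (σ l = i) = (l = σ⁻¹ i) := fun l => propext
    ⟨fun h => by simp [← h], fun h => by simp [h]⟩
  have key2 : ∀ l : Fin d, (σ l = j) = (l = σ⁻¹ j) := fun l => propext
    ⟨fun h => by simp [← h], fun h => by simp [h]⟩
  simp [Matrix.mul_apply, permMat, Matrix.transpose_apply, key, key2, ite_mul, mul_ite,
    Finset.sum_ite_eq']

lemma permMat_inv_apply {d : ℕ} {σ : Equiv.Perm (Fin d)} {A : Matrix (Fin d) (Fin d) ℝ}
    (h : permMat σ * A * (permMat σ)ᵀ = A) (i j : Fin d) : A (σ i) (σ j) = A i j := by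
  have := congrFun (congrFun h (σ i)) (σ j)
  rw [permMat_conj] at this
  simpa using this.symm

lemma sum_split {d : ℕ} (f : Fin d → ℝ) (a b : Fin d) (hab : a ≠ b) :
    ∑ j, f j = f a + f b + ∑ j ∈ (Finset.univ.erase a).erase b, f j := by
  rw [← Finset.add_sum_erase _ f (Finset.mem_univ a),
    ← Finset.add_sum_erase _ f (Finset.mem_erase.2 ⟨hab.symm, Finset.mem_univ b⟩)]
  ring

lemma card_erase2 {d : ℕ} (a b : Fin d) (hab : a ≠ b) :
    ((Finset.univ.erase a).erase b).card = d - 2 := by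
  rw [Finset.card_erase_of_mem (Finset.mem_erase.2 ⟨hab.symm, Finset.mem_univ b⟩),
    Finset.card_erase_of_mem (Finset.mem_univ a)]
  simp [Finset.card_univ]; omega

lemma skew_apply {d : ℕ} {A : Matrix (Fin d) (Fin d) ℝ} (hA : Aᵀ = -A) (i j : Fin d) :
    A j i = -A i j := by
  have := congrFun (congrFun hA i) j
  simpa using this

lemma diag_zero {d : ℕ} {A : Matrix (Fin d) (Fin d) ℝ} (hA : Aᵀ = -A) (i : Fin d) :
    A i i = 0 := by
  have := skew_apply hA i i; linarith

lemma part1 {d : ℕ} (hd : 4 ≤ d) (A : Matrix (Fin d) (Fin d) ℝ)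
    (hA : Aᵀ = -A) (hsum : ∀ i, ∑ j, A i j = 0)
    (h : ∀ σ : Equiv.Perm (Fin d), σ ⟨d - 1, Nat.sub_lt (by omega) (by omega)⟩ = ⟨d - 1, Nat.sub_lt (by omega) (by omega)⟩ →
      permMat σ * A * (permMat σ)ᵀ = A) : A = 0 := by
  set q : Fin d := ⟨d - 1, by omega⟩ with hq
  have off : ∀ i j : Fin d, i ≠ q → j ≠ q → A i j = 0 := by
    intro i j hi hj
    rcases eq_or_ne i j with rfl | hij
    · exact diag_zero hA i
    have hs := h (Equiv.swap i j) (Equiv.swap_apply_of_ne_of_ne hi.symm hj.symm)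
    have h1 := permMat_inv_apply hs i j
    rw [Equiv.swap_apply_left, Equiv.swap_apply_right] at h1
    have h2 := skew_apply hA i j
    linarith
  have col : ∀ i : Fin d, i ≠ q → A i q = 0 := by
    intro i hi
    have hs := hsum i
    rw [← Finset.add_sum_erase _ _ (Finset.mem_univ q),
      Finset.sum_eq_zero (fun j hj => off i j hi (Finset.ne_of_mem_erase hj))] at hs
    linarith
  ext i j
  simp only [Matrix.zero_apply]
  rcases eq_or_ne i q with rfl | hi
  · rcases eq_or_ne j q with rfl | hj
    · exact diag_zero hA q
    · rw [skew_apply hA j q, col j hj, neg_zero]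
  · rcases eq_or_ne j q with rfl | hj
    · exact col i hi
    · exact off i j hi hj

lemma sum_ite_two {d : ℕ} (hd : 4 ≤ d) (a b : Fin d) (hab : a ≠ b) (x y z : ℝ) :
    ∑ j : Fin d, (if j = a then x else if j = b then y else z)
      = x + y + ((d : ℝ) - 2) * z := by
  rw [sum_split _ a b hab, if_pos rfl, if_neg hab.symm, if_pos rfl,
    Finset.sum_congr rfl (fun j hj => by
      have h1 := Finset.mem_erase.1 hj
      have h2 := Finset.mem_erase.1 h1.2
      rw [if_neg h2.1, if_neg h1.1]),
    Finset.sum_const, card_erase2 a b hab, nsmul_eq_mul]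
  have : ((d - 2 : ℕ) : ℝ) = (d : ℝ) - 2 := by
    push_cast [Nat.cast_sub (by omega : 2 ≤ d)]; ring
  rw [this]

noncomputable def fam {d : ℕ} (p q : Fin d) (α : ℝ) : Matrix (Fin d) (Fin d) ℝ :=
  Matrix.of fun i j : Fin d =>
    if i = p then
      (if j = q then -α else if j = p then 0 else α / ((d : ℝ) - 2))
    else if i = q then
      (if j = p then α else if j = q then 0 else -α / ((d : ℝ) - 2))
    else if j = p then -α / ((d : ℝ) - 2)
    else if j = q then α / ((d : ℝ) - 2)
    else 0

lemma fam_smul {d : ℕ} (p q : Fin d) (α : ℝ) : fam p q α = α • fam p q 1 := by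
  ext i j
  simp only [fam, Matrix.of_apply, Matrix.smul_apply, smul_eq_mul]
  split_ifs <;> ring

lemma fam_skew {d : ℕ} {p q : Fin d} (hpq : p ≠ q) (α : ℝ) :
    (fam p q α)ᵀ = -fam p q α := by
  ext i j
  simp only [fam, Matrix.transpose_apply, Matrix.neg_apply, Matrix.of_apply]
  split_ifs <;> subst_vars <;> first | exact (hpq rfl).elim | ring

lemma fam_apply_p {d : ℕ} (p q : Fin d) (α : ℝ) (j : Fin d) :
    fam p q α p j = if j = q then -α else if j = p then 0 else α / ((d : ℝ) - 2) := by
  simp only [fam, Matrix.of_apply, eq_self_iff_true, if_true]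

lemma fam_apply_q {d : ℕ} {p q : Fin d} (hpq : p ≠ q) (α : ℝ) (j : Fin d) :
    fam p q α q j = if j = p then α else if j = q then 0 else -α / ((d : ℝ) - 2) := by
  simp only [fam, Matrix.of_apply, if_neg (Ne.symm hpq), eq_self_iff_true, if_true]

lemma fam_apply_other {d : ℕ} {p q i : Fin d} (hip : i ≠ p) (hiq : i ≠ q) (α : ℝ) (j : Fin d) :
    fam p q α i j = if j = p then -α / ((d : ℝ) - 2) else if j = q then α / ((d : ℝ) - 2) else 0 := by
  simp only [fam, Matrix.of_apply, if_neg hip, if_neg hiq]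

lemma fam_sum {d : ℕ} (hd : 4 ≤ d) {p q : Fin d} (hpq : p ≠ q) (α : ℝ) (i : Fin d) :
    ∑ j, fam p q α i j = 0 := by
  have hd2 : ((d : ℝ) - 2) ≠ 0 := by
    have : (4 : ℝ) ≤ (d : ℝ) := by exact_mod_cast hd
    linarith
  rcases eq_or_ne i p with hip | hip
  · rw [hip]
    simp only [fam_apply_p]
    rw [sum_ite_two hd q p hpq.symm]
    field_simp
    ring
  rcases eq_or_ne i q with hiq | hiq
  · rw [hiq]
    simp only [fam_apply_q hpq]
    rw [sum_ite_two hd p q hpq]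
    field_simp
    ring
  · simp only [fam_apply_other hip hiq]
    rw [sum_ite_two hd p q hpq]
    ring
lemma fam_inv {d : ℕ} {p q : Fin d} (α : ℝ) (σ : Equiv.Perm (Fin d))
    (hσp : σ p = p) (hσq : σ q = q) :
    permMat σ * fam p q α * (permMat σ)ᵀ = fam p q α := by
  ext i j
  rw [permMat_conj]
  have ep : ∀ x : Fin d, σ⁻¹ x = p ↔ x = p := fun x => by
    rw [Equiv.Perm.inv_eq_iff_eq, hσp]
  have eq' : ∀ x : Fin d, σ⁻¹ x = q ↔ x = q := fun x => by
    rw [Equiv.Perm.inv_eq_iff_eq, hσq]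
  simp only [fam, Matrix.of_apply, ep, eq']

lemma part2 {d : ℕ} (hd : 4 ≤ d) (A : Matrix (Fin d) (Fin d) ℝ)
    (hA : Aᵀ = -A) (hsum : ∀ i, ∑ j, A i j = 0)
    (h : ∀ σ : Equiv.Perm (Fin d), σ ⟨d - 2, Nat.sub_lt (by omega) (by omega)⟩ = ⟨d - 2, Nat.sub_lt (by omega) (by omega)⟩ →
      σ ⟨d - 1, Nat.sub_lt (by omega) (by omega)⟩ = ⟨d - 1, Nat.sub_lt (by omega) (by omega)⟩ →
      permMat σ * A * (permMat σ)ᵀ = A) :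
    ∃ α : ℝ, A = fam ⟨d - 2, Nat.sub_lt (by omega) (by omega)⟩ ⟨d - 1, Nat.sub_lt (by omega) (by omega)⟩ α := by
  set p : Fin d := ⟨d - 2, by omega⟩ with hp
  set q : Fin d := ⟨d - 1, by omega⟩ with hq
  have hpq : p ≠ q := by
    intro hh; apply_fun Fin.val at hh; simp [hp, hq] at hh; omega
  set i₀ : Fin d := ⟨0, by omega⟩ with hi₀
  have h0p : i₀ ≠ p := by intro hh; apply_fun Fin.val at hh; simp [hp, hi₀] at hh; omega
  have h0q : i₀ ≠ q := by intro hh; apply_fun Fin.val at hh; simp [hq, hi₀] at hh; omega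
  have hd2 : ((d : ℝ) - 2) ≠ 0 := by
    have : (4 : ℝ) ≤ (d : ℝ) := by exact_mod_cast hd
    linarith
  -- generic entries vanish
  have off : ∀ i j : Fin d, i ≠ p → i ≠ q → j ≠ p → j ≠ q → A i j = 0 := by
    intro i j hip hiq hjp hjq
    rcases eq_or_ne i j with rfl | hij
    · exact diag_zero hA i
    have hs := h (Equiv.swap i j) (Equiv.swap_apply_of_ne_of_ne hip.symm hjp.symm)
      (Equiv.swap_apply_of_ne_of_ne hiq.symm hjq.symm)
    have h1 := permMat_inv_apply hs i j
    rw [Equiv.swap_apply_left, Equiv.swap_apply_right] at h1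
    have h2 := skew_apply hA i j
    linarith
  -- columns p and q are constant off {p,q}
  have constq : ∀ i : Fin d, i ≠ p → i ≠ q → A i q = A i₀ q := by
    intro i hip hiq
    rcases eq_or_ne i i₀ with rfl | hii
    · rfl
    have hs := h (Equiv.swap i i₀) (Equiv.swap_apply_of_ne_of_ne hip.symm h0p.symm)
      (Equiv.swap_apply_of_ne_of_ne hiq.symm h0q.symm)
    have h1 := permMat_inv_apply hs i q
    rw [Equiv.swap_apply_left, Equiv.swap_apply_of_ne_of_ne hiq.symm h0q.symm] at h1
    exact h1.symm
  have rowi : ∀ i : Fin d, i ≠ p → i ≠ q → A i p + A i q = 0 := by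
    intro i hip hiq
    have hs := hsum i
    rw [sum_split (A i) p q hpq,
      Finset.sum_eq_zero (fun j hj => by
        have h1 := Finset.mem_erase.1 hj
        have h2 := Finset.mem_erase.1 h1.2
        exact off i j hip hiq h2.1 h1.1)] at hs
    linarith
  set α : ℝ := ((d : ℝ) - 2) * A i₀ q with hα
  have hAq : ∀ i : Fin d, i ≠ p → i ≠ q → A i q = α / ((d : ℝ) - 2) := by
    intro i hip hiq
    rw [constq i hip hiq, hα, mul_div_cancel_left₀ _ hd2]
  have hAp : ∀ i : Fin d, i ≠ p → i ≠ q → A i p = -α / ((d : ℝ) - 2) := by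
    intro i hip hiq
    have h1 := rowi i hip hiq
    rw [hAq i hip hiq] at h1
    rw [neg_div]
    linarith
  have hApq : A p q = -α := by
    have hs := hsum p
    have hconst : ∀ j ∈ (Finset.univ.erase p).erase q, A p j = α / ((d : ℝ) - 2) := by
      intro j hj
      have h1 := Finset.mem_erase.1 hj
      have h2 := Finset.mem_erase.1 h1.2
      rw [skew_apply hA j p, hAp j h2.1 h1.1]
      ring
    rw [sum_split (A p) p q hpq, diag_zero hA p, Finset.sum_congr rfl hconst,
      Finset.sum_const, card_erase2 p q hpq, nsmul_eq_mul] at hs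
    have hcast : ((d - 2 : ℕ) : ℝ) = (d : ℝ) - 2 := by
      push_cast [Nat.cast_sub (by omega : 2 ≤ d)]; ring
    rw [hcast] at hs
    have : ((d : ℝ) - 2) * (α / ((d : ℝ) - 2)) = α := by field_simp
    linarith
  refine ⟨α, ?_⟩
  ext i j
  rcases eq_or_ne i p with hip | hip
  · rw [hip, fam_apply_p]
    rcases eq_or_ne j q with hjq | hjq
    · rw [hjq, if_pos rfl]; exact hApq
    rcases eq_or_ne j p with hjp | hjp
    · rw [hjp, if_neg hpq, if_pos rfl]; exact diag_zero hA p
    · rw [if_neg hjq, if_neg hjp, skew_apply hA j p, hAp j hjp hjq]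
      ring
  rcases eq_or_ne i q with hiq | hiq
  · rw [hiq, fam_apply_q hpq]
    rcases eq_or_ne j p with hjp | hjp
    · rw [hjp, if_pos rfl, skew_apply hA p q, hApq]; ring
    rcases eq_or_ne j q with hjq | hjq
    · rw [hjq, if_neg (Ne.symm hpq), if_pos rfl]; exact diag_zero hA q
    · rw [if_neg hjp, if_neg hjq, skew_apply hA j q, hAq j hjp hjq]
      ring
  · rw [fam_apply_other hip hiq]
    rcases eq_or_ne j p with hjp | hjp
    · rw [hjp, if_pos rfl]; exact hAp i hip hiq
    rcases eq_or_ne j q with hjq | hjq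
    · rw [hjq, if_neg (Ne.symm hpq), if_pos rfl]; exact hAq i hip hiq
    · rw [if_neg hjp, if_neg hjq]; exact off i j hip hiq hjp hjq

lemma mem_Ad2 {d : ℕ} {A : Matrix (Fin d) (Fin d) ℝ} :
    A ∈ Ad2 d ↔ (Aᵀ = -A ∧ ∀ i, ∑ j, A i j = 0) := Iff.rfl

lemma mem_fixedSpace {d : ℕ} {G : Set (Equiv.Perm (Fin d))} {W : Matrix (Fin d) (Fin d) ℝ} :
    W ∈ fixedSpace G ↔ ∀ σ ∈ G, permMat σ * W * (permMat σ)ᵀ = W := Iff.rfl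

/-- for `d ≥ 4`: (i) the only matrix of `𝔸_{d,2}` fixed by all
permutations fixing the last index is zero; (ii) the matrices of `𝔸_{d,2}` fixed by
all permutations fixing the last two indices are exactly the explicit one-parameter
family described, so that `𝔸_{d,2} ∩ M(d,d)^{S_{d−2}×S_1×S_1}` is one-dimensional. -/
theorem Ad2_fixed_vectors (d : ℕ) (hd : 4 ≤ d) :
    (∀ A ∈ Ad2 d,
      (∀ σ : Equiv.Perm (Fin d), σ ⟨d - 1, by omega⟩ = ⟨d - 1, by omega⟩ →
        permMat σ * A * (permMat σ)ᵀ = A) → A = 0) ∧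
    (∀ A ∈ Ad2 d,
      ((∀ σ : Equiv.Perm (Fin d), σ ⟨d - 2, by omega⟩ = ⟨d - 2, by omega⟩ →
          σ ⟨d - 1, by omega⟩ = ⟨d - 1, by omega⟩ →
          permMat σ * A * (permMat σ)ᵀ = A) ↔
        ∃ α : ℝ, A = Matrix.of fun i j : Fin d =>
          if i = ⟨d - 2, by omega⟩ then
            (if j = ⟨d - 1, by omega⟩ then -α else if j = ⟨d - 2, by omega⟩ then 0
             else α / ((d : ℝ) - 2))
          else if i = ⟨d - 1, by omega⟩ then
            (if j = ⟨d - 2, by omega⟩ then α else if j = ⟨d - 1, by omega⟩ then 0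
             else -α / ((d : ℝ) - 2))
          else if j = ⟨d - 2, by omega⟩ then -α / ((d : ℝ) - 2)
          else if j = ⟨d - 1, by omega⟩ then α / ((d : ℝ) - 2)
          else 0)) ∧
    Module.finrank ℝ
      ↥(Ad2 d ⊓ fixedSpace {σ : Equiv.Perm (Fin d) |
          σ ⟨d - 2, by omega⟩ = ⟨d - 2, by omega⟩ ∧
          σ ⟨d - 1, by omega⟩ = ⟨d - 1, by omega⟩}) = 1 := by
  have hpq : (⟨d - 2, by omega⟩ : Fin d) ≠ ⟨d - 1, by omega⟩ := by
    intro hh; apply_fun Fin.val at hh; simp at hh; omega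
  refine ⟨?_, ?_, ?_⟩
  · intro A hA h
    exact part1 hd A (mem_Ad2.1 hA).1 (mem_Ad2.1 hA).2 h
  · intro A hA
    constructor
    · intro h
      exact part2 hd A (mem_Ad2.1 hA).1 (mem_Ad2.1 hA).2 h
    · rintro ⟨α, rfl⟩ σ h1 h2
      exact fam_inv (p := ⟨d - 2, by omega⟩) (q := ⟨d - 1, by omega⟩) α σ h1 h2
  · have hne : fam (⟨d - 2, by omega⟩ : Fin d) ⟨d - 1, by omega⟩ (1 : ℝ) ≠ 0 := by
      intro hcon
      have h2 := congrFun (congrFun hcon ⟨d - 2, by omega⟩) ⟨d - 1, by omega⟩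
      rw [fam_apply_p, if_pos rfl, Matrix.zero_apply] at h2
      norm_num at h2
    have key : Ad2 d ⊓ fixedSpace {σ : Equiv.Perm (Fin d) |
          σ ⟨d - 2, by omega⟩ = ⟨d - 2, by omega⟩ ∧
          σ ⟨d - 1, by omega⟩ = ⟨d - 1, by omega⟩}
        = Submodule.span ℝ {fam (⟨d - 2, by omega⟩ : Fin d) ⟨d - 1, by omega⟩ (1 : ℝ)} := by
      apply le_antisymm
      · intro A hAmem
        rw [Submodule.mem_inf] at hAmem
        obtain ⟨hA1, hA2⟩ := hAmem
        obtain ⟨α, rfl⟩ := part2 hd A (mem_Ad2.1 hA1).1 (mem_Ad2.1 hA1).2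
          (fun σ ha hb => (mem_fixedSpace.1 hA2) σ ⟨ha, hb⟩)
        rw [Submodule.mem_span_singleton]
        exact ⟨α, (fam_smul _ _ α).symm⟩
      · rw [Submodule.span_le, Set.singleton_subset_iff, SetLike.mem_coe, Submodule.mem_inf]
        exact ⟨mem_Ad2.2 ⟨fam_skew hpq 1, fam_sum hd hpq 1⟩,
          mem_fixedSpace.2 fun σ hσ => fam_inv 1 σ hσ.1 hσ.2⟩
    rw [key, finrank_span_singleton hne]
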